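/- arXiv:2504.13109 — 3 statements merged into one kernel-verified Lean document; each statement's English description precedes it below -/
import Mathlib

section
/- Under the Uni-Inv inversion step with second-order corrector velocity v̄ = v Ẑ_{i-1} t_{i-1}, if the previous iterate is exact, i.e. Ẑ_{i-1} = Z t_{i-1}, then the one-step (local) inversion error satisfies ‖Z t_i − Ẑ_i‖ ≤ X₁ · (C·X₁ + X₂) · Δt³. (Proposition 1 of the paper: the local error of Uni-Inv inversion is O(Δt³).) -/
/-- **Proposition 1 (local error of Uni-Inv).**
Under the Uni-Inv inversion step with second-order corrector velocity
`v̄ = v Ẑprev tprev`, if the previous iterate is exact (`Ẑprev = Z tprev`),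
then the one-step (local) inversion error satisfies
`‖Z ti − Ẑ‖ ≤ X₁ · (C·X₁ + X₂) · Δt³`. -/
theorem uniInv_local_error
    {E : Type*} [NormedAddCommGroup E] [NormedSpace ℝ E]
    (v : E → ℝ → E) (X₁ X₂ C : ℝ)
    (hX₁ : 0 ≤ X₁) (hX₂ : 0 ≤ X₂) (hC : 0 ≤ C)
    (hLipx : ∀ t ∈ Set.Icc (0:ℝ) 1, ∀ x y : E, ‖v x t - v y t‖ ≤ X₁ * ‖x - y‖)
    (hLipt : ∀ x : E, ∀ s ∈ Set.Icc (0:ℝ) 1, ∀ t ∈ Set.Icc (0:ℝ) 1,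
      ‖v x s - v x t‖ ≤ X₂ * |s - t|)
    (Z : ℝ → E)
    (hZ : ∀ p ∈ Set.Icc (0:ℝ) 1, ∀ q ∈ Set.Icc (0:ℝ) 1, ‖Z p - Z q‖ ≤ C * |p - q|)
    (tprev ti Δt : ℝ)
    (h0 : 0 ≤ tprev) (hlt : tprev < ti) (h1 : ti ≤ 1)
    (hΔt : Δt = ti - tprev)
    (hEuler : Z ti = Z tprev + Δt • v (Z ti) ti)
    (Zhatprev vbar Zbar vhat Zhat : E)
    (hprev : Zhatprev = Z tprev)
    (hvbar : vbar = v Zhatprev tprev)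
    (hZbar : Zbar = Zhatprev + Δt • vbar)
    (hvhat : vhat = v Zbar ti)
    (hZhat : Zhat = Zhatprev + Δt • vhat) :
    ‖Z ti - Zhat‖ ≤ X₁ * (C * X₁ + X₂) * Δt ^ 3 := by

  have hti : ti ∈ Set.Icc (0:ℝ) 1 := ⟨le_trans h0 hlt.le, h1⟩
  have htp : tprev ∈ Set.Icc (0:ℝ) 1 := ⟨h0, le_trans hlt.le h1⟩
  have hΔ0 : 0 ≤ Δt := by rw [hΔt]; linarith
  -- bound on ‖Z ti - Zbar‖
  have key : Z ti - Zbar = Δt • (v (Z ti) ti - v (Z tprev) tprev) := by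
    rw [hZbar, hvbar, hprev, smul_sub]; nth_rewrite 1 [hEuler]; abel
  have h1b : ‖Z ti - Zbar‖ ≤ Δt ^ 2 * (C * X₁ + X₂) := by
    rw [key, norm_smul, Real.norm_eq_abs, abs_of_nonneg hΔ0]
    have h2 : ‖v (Z ti) ti - v (Z tprev) tprev‖ ≤
        ‖v (Z ti) ti - v (Z tprev) ti‖ + ‖v (Z tprev) ti - v (Z tprev) tprev‖ :=
      norm_sub_le_norm_sub_add_norm_sub _ _ _
    have h3 : ‖v (Z ti) ti - v (Z tprev) ti‖ ≤ X₁ * (C * Δt) := by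
      calc ‖v (Z ti) ti - v (Z tprev) ti‖ ≤ X₁ * ‖Z ti - Z tprev‖ := hLipx ti hti _ _
        _ ≤ X₁ * (C * Δt) := by
            have := hZ ti hti tprev htp
            rw [hΔt]
            have habs : |ti - tprev| = ti - tprev := abs_of_nonneg (by linarith)
            rw [habs] at this
            exact mul_le_mul_of_nonneg_left this hX₁
    have h4 : ‖v (Z tprev) ti - v (Z tprev) tprev‖ ≤ X₂ * Δt := by
      have := hLipt (Z tprev) ti hti tprev htp
      rw [hΔt]
      have habs : |ti - tprev| = ti - tprev := abs_of_nonneg (by linarith)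
      linarith [this, habs ▸ this]
    nlinarith [norm_nonneg (v (Z ti) ti - v (Z tprev) tprev)]
  have key2 : Z ti - Zhat = Δt • (v (Z ti) ti - vhat) := by
    rw [hZhat, hprev, smul_sub]; nth_rewrite 1 [hEuler]; abel
  rw [key2, norm_smul, Real.norm_eq_abs, abs_of_nonneg hΔ0, hvhat]
  have h5 : ‖v (Z ti) ti - v Zbar ti‖ ≤ X₁ * (Δt ^ 2 * (C * X₁ + X₂)) := by
    calc ‖v (Z ti) ti - v Zbar ti‖ ≤ X₁ * ‖Z ti - Zbar‖ := hLipx ti hti _ _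
      _ ≤ X₁ * (Δt ^ 2 * (C * X₁ + X₂)) := by nlinarith [norm_nonneg (Z ti - Zbar)]
  nlinarith [norm_nonneg (v (Z ti) ti - v Zbar ti)]
end

section
/- Under the Uni-Inv inversion step with second-order corrector velocity v̄ = v Ẑ_{i-1} t_{i-1}, the one-step inversion error with accumulated previous error E_A = ‖Z t_{i-1} − Ẑ_{i-1}‖ satisfies ‖Z t_i − Ẑ_i‖ ≤ (1 + X₁·Δt + X₁²·Δt²) · E_A + X₁·(C·X₁ + X₂)·Δt³. -/
/-- Under the Uni-Inv inversion step with second-order corrector velocity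
`v̄ = v Ẑprev tprev`, the one-step inversion error with accumulated previous error
`E_A = ‖Z tprev − Ẑprev‖` satisfies
`‖Z ti − Ẑ‖ ≤ (1 + X₁·Δt + X₁²·Δt²) · E_A + X₁·(C·X₁ + X₂)·Δt³`. -/
theorem uniInv_one_step_error_with_accumulation
    {E : Type*} [NormedAddCommGroup E] [NormedSpace ℝ E]
    (v : E → ℝ → E) (X₁ X₂ C : ℝ)
    (hX₁ : 0 ≤ X₁) (hX₂ : 0 ≤ X₂) (hC : 0 ≤ C)
    (hLipx : ∀ t ∈ Set.Icc (0:ℝ) 1, ∀ x y : E, ‖v x t - v y t‖ ≤ X₁ * ‖x - y‖)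
    (hLipt : ∀ x : E, ∀ s ∈ Set.Icc (0:ℝ) 1, ∀ t ∈ Set.Icc (0:ℝ) 1,
      ‖v x s - v x t‖ ≤ X₂ * |s - t|)
    (Z : ℝ → E)
    (hZ : ∀ p ∈ Set.Icc (0:ℝ) 1, ∀ q ∈ Set.Icc (0:ℝ) 1, ‖Z p - Z q‖ ≤ C * |p - q|)
    (tprev ti Δt : ℝ)
    (h0 : 0 ≤ tprev) (hlt : tprev < ti) (h1 : ti ≤ 1)
    (hΔt : Δt = ti - tprev)
    (hEuler : Z ti = Z tprev + Δt • v (Z ti) ti)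
    (Zhatprev vbar Zbar vhat Zhat : E)
    (hvbar : vbar = v Zhatprev tprev)
    (hZbar : Zbar = Zhatprev + Δt • vbar)
    (hvhat : vhat = v Zbar ti)
    (hZhat : Zhat = Zhatprev + Δt • vhat) :
    ‖Z ti - Zhat‖ ≤
      (1 + X₁ * Δt + X₁ ^ 2 * Δt ^ 2) * ‖Z tprev - Zhatprev‖
        + X₁ * (C * X₁ + X₂) * Δt ^ 3 := by
  subst hvbar hZbar hvhat hZhat hΔt
  set Δt := ti - tprev with hΔ
  have htp : tprev ∈ Set.Icc (0:ℝ) 1 := ⟨h0, hlt.le.trans h1⟩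
  have hti : ti ∈ Set.Icc (0:ℝ) 1 := ⟨h0.trans hlt.le, h1⟩
  have hΔ0 : 0 ≤ Δt := by simp [hΔ]; linarith
  set EA := ‖Z tprev - Zhatprev‖ with hEA
  set Zbar := Zhatprev + Δt • v Zhatprev tprev with hZb
  have hvdiff : ‖v (Z ti) ti - v Zhatprev tprev‖ ≤ X₁ * (C * Δt) + X₂ * Δt + X₁ * EA := by
    have h1' : ‖v (Z ti) ti - v (Z tprev) ti‖ ≤ X₁ * (C * Δt) := by
      have := hLipx ti hti (Z ti) (Z tprev)
      have hz := hZ ti hti tprev htp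
      have habs : |ti - tprev| = Δt := abs_of_nonneg hΔ0
      rw [habs] at hz
      calc ‖v (Z ti) ti - v (Z tprev) ti‖ ≤ X₁ * ‖Z ti - Z tprev‖ := this
        _ ≤ X₁ * (C * Δt) := by nlinarith
    have h2' : ‖v (Z tprev) ti - v (Z tprev) tprev‖ ≤ X₂ * Δt := by
      have := hLipt (Z tprev) ti hti tprev htp
      rwa [abs_of_nonneg hΔ0] at this
    have h3' : ‖v (Z tprev) tprev - v Zhatprev tprev‖ ≤ X₁ * EA := hLipx tprev htp _ _
    calc ‖v (Z ti) ti - v Zhatprev tprev‖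
        ≤ ‖v (Z ti) ti - v (Z tprev) ti‖ + ‖v (Z tprev) ti - v (Z tprev) tprev‖
            + ‖v (Z tprev) tprev - v Zhatprev tprev‖ := by
          have := norm_add₃_le (a := v (Z ti) ti - v (Z tprev) ti)
            (b := v (Z tprev) ti - v (Z tprev) tprev) (c := v (Z tprev) tprev - v Zhatprev tprev)
          simpa using this
      _ ≤ X₁ * (C * Δt) + X₂ * Δt + X₁ * EA := by linarith
  have hbar : ‖Z ti - Zbar‖ ≤ (1 + X₁ * Δt) * EA + (C * X₁ + X₂) * Δt ^ 2 := by
    have heq : Z ti - Zbar = (Z tprev - Zhatprev) + Δt • (v (Z ti) ti - v Zhatprev tprev) := by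
      conv_lhs => rw [hEuler]
      rw [hZb, smul_sub]; abel
    calc ‖Z ti - Zbar‖ ≤ EA + ‖Δt • (v (Z ti) ti - v Zhatprev tprev)‖ := by
          rw [heq]; exact norm_add_le _ _
      _ = EA + Δt * ‖v (Z ti) ti - v Zhatprev tprev‖ := by
          rw [norm_smul, Real.norm_of_nonneg hΔ0]
      _ ≤ EA + Δt * (X₁ * (C * Δt) + X₂ * Δt + X₁ * EA) := by nlinarith
      _ = (1 + X₁ * Δt) * EA + (C * X₁ + X₂) * Δt ^ 2 := by ring
  have heq2 : Z ti - (Zhatprev + Δt • v Zbar ti)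
      = (Z tprev - Zhatprev) + Δt • (v (Z ti) ti - v Zbar ti) := by
    conv_lhs => rw [hEuler]
    rw [smul_sub]; abel
  have hv2 : ‖v (Z ti) ti - v Zbar ti‖ ≤ X₁ * ‖Z ti - Zbar‖ := hLipx ti hti _ _
  have hEA0 : 0 ≤ EA := norm_nonneg _
  calc ‖Z ti - (Zhatprev + Δt • v Zbar ti)‖
      ≤ EA + Δt * ‖v (Z ti) ti - v Zbar ti‖ := by
        rw [heq2]
        refine (norm_add_le _ _).trans ?_
        rw [norm_smul, Real.norm_of_nonneg hΔ0]
    _ ≤ EA + Δt * (X₁ * ((1 + X₁ * Δt) * EA + (C * X₁ + X₂) * Δt ^ 2)) := by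
        have hb : ‖v (Z ti) ti - v Zbar ti‖ ≤ X₁ * ((1 + X₁ * Δt) * EA + (C * X₁ + X₂) * Δt ^ 2) :=
          hv2.trans (by nlinarith)
        nlinarith [mul_le_mul_of_nonneg_left hb hΔ0]
    _ ≤ (1 + X₁ * Δt + X₁ ^ 2 * Δt ^ 2) * EA + X₁ * (C * X₁ + X₂) * Δt ^ 3 := by nlinarith
end

section
/- Let N ≥ 1, h = 1/N, and grid points t_j = j·h for j = 0,…,N. Suppose Z : [0,1] → E satisfies the Euler relation Z t_j = Z t_{j-1} + h · v (Z t_j) t_j at every step, and define the Uni-Inv iterates by Ẑ_0 = Z 0 and, for j = 1,…,N, Ẑ_j = Ẑ_{j-1} + h · v (Ẑ_{j-1} + h · v Ẑ_{j-1} t_{j-1}) t_j (i.e., each step uses the second-order corrector velocity v̄_j = v Ẑ_{j-1} t_{j-1}). If X₁ > 0, then the global inversion error satisfies ‖Z 1 − Ẑ_N‖ ≤ (C·X₁ + X₂) · (exp(X₁ + X₁²) − 1) · h². (The paper's global error claim: the global error of Uni-Inv is O(max_i Δt_i²).) -/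
/-- **Global error of Uni-Inv.** On the uniform grid `t j = j·h`, `h = 1/N`, if `Z`
satisfies the Euler relation at every step and the Uni-Inv iterates use the
second-order corrector velocity at each step, then
`‖Z 1 − Ẑ N‖ ≤ (C·X₁ + X₂)·(exp (X₁ + X₁²) − 1)·h²`, i.e. the global error is
`O(h²)`. -/
theorem uniInv_global_error
    {E : Type*} [NormedAddCommGroup E] [NormedSpace ℝ E]
    (v : E → ℝ → E) (X₁ X₂ C : ℝ)
    (hX₁ : 0 < X₁) (hX₂ : 0 ≤ X₂) (hC : 0 ≤ C)
    (hLipx : ∀ t ∈ Set.Icc (0:ℝ) 1, ∀ x y : E, ‖v x t - v y t‖ ≤ X₁ * ‖x - y‖)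
    (hLipt : ∀ x : E, ∀ s ∈ Set.Icc (0:ℝ) 1, ∀ t ∈ Set.Icc (0:ℝ) 1,
      ‖v x s - v x t‖ ≤ X₂ * |s - t|)
    (Z : ℝ → E)
    (hZ : ∀ p ∈ Set.Icc (0:ℝ) 1, ∀ q ∈ Set.Icc (0:ℝ) 1, ‖Z p - Z q‖ ≤ C * |p - q|)
    (N : ℕ) (hN : 1 ≤ N)
    (h : ℝ) (hh : h = 1 / N)
    (t : ℕ → ℝ) (ht : ∀ j, t j = j * h)
    (hEuler : ∀ j, 1 ≤ j → j ≤ N →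
      Z (t j) = Z (t (j - 1)) + h • v (Z (t j)) (t j))
    (Zhat : ℕ → E)
    (hZhat0 : Zhat 0 = Z 0)
    (hZhatStep : ∀ j, 1 ≤ j → j ≤ N →
      Zhat j = Zhat (j - 1)
        + h • v (Zhat (j - 1) + h • v (Zhat (j - 1)) (t (j - 1))) (t j)) :
    ‖Z 1 - Zhat N‖ ≤ (C * X₁ + X₂) * (Real.exp (X₁ + X₁ ^ 2) - 1) * h ^ 2 := by
  have hN0 : (0:ℝ) < N := by exact_mod_cast hN
  have hh0 : 0 < h := by rw [hh]; positivity
  have hNh : (N:ℝ) * h = 1 := by rw [hh]; field_simp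
  have hh1 : h ≤ 1 := by
    rw [hh, div_le_one hN0]
    exact_mod_cast hN
  set a : ℝ := h * X₁ + h ^ 2 * X₁ ^ 2 with ha
  have ha0 : 0 ≤ a := by positivity
  set B : ℝ := (C * X₁ + X₂) * h ^ 2 with hB
  have hK : 0 ≤ C * X₁ + X₂ := by positivity
  have hB0 : 0 ≤ B := by positivity
  have hmem : ∀ j : ℕ, j ≤ N → t j ∈ Set.Icc (0:ℝ) 1 := by
    intro j hj
    rw [ht]
    constructor
    · positivity
    · calc (j:ℝ) * h ≤ (N:ℝ) * h := by
            apply mul_le_mul_of_nonneg_right _ hh0.le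
            exact_mod_cast hj
        _ = 1 := hNh
  have hstep : ∀ j : ℕ, j + 1 ≤ N →
      ‖Z (t (j+1)) - Zhat (j+1)‖ ≤
        (1 + a) * ‖Z (t j) - Zhat j‖ + X₁ * (C * X₁ + X₂) * h ^ 3 := by
    intro j hj
    have h1 : 1 ≤ j + 1 := Nat.le_add_left 1 j
    have hE := hEuler (j+1) h1 hj
    have hS := hZhatStep (j+1) h1 hj
    simp only [Nat.add_sub_cancel] at hE hS
    have htdiff : t (j+1) - t j = h := by
      rw [ht, ht]; push_cast; ring
    have habs : |t (j+1) - t j| = h := by rw [htdiff]; exact abs_of_pos hh0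
    have hmj : t j ∈ Set.Icc (0:ℝ) 1 := hmem j (by omega)
    have hmj1 : t (j+1) ∈ Set.Icc (0:ℝ) 1 := hmem (j+1) hj
    set w := Zhat j + h • v (Zhat j) (t j) with hw
    have htrunc : ‖v (Z (t (j+1))) (t (j+1)) - v (Z (t j)) (t j)‖ ≤ (C * X₁ + X₂) * h := by
      have hpart1 : ‖v (Z (t (j+1))) (t (j+1)) - v (Z (t j)) (t (j+1))‖ ≤ X₁ * (C * h) := by
        refine le_trans (hLipx _ hmj1 _ _) ?_
        refine mul_le_mul_of_nonneg_left ?_ hX₁.le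
        have := hZ _ hmj1 _ hmj
        rwa [habs] at this
      have hpart2 : ‖v (Z (t (j+1))) (t (j+1)) - v (Z (t j)) (t (j+1))
            + (v (Z (t j)) (t (j+1)) - v (Z (t j)) (t j))‖
          ≤ X₁ * (C * h) + X₂ * h := by
        refine le_trans (norm_add_le _ _) (add_le_add hpart1 ?_)
        have := hLipt (Z (t j)) _ hmj1 _ hmj
        rwa [habs] at this
      have : v (Z (t (j+1))) (t (j+1)) - v (Z (t j)) (t j)
          = v (Z (t (j+1))) (t (j+1)) - v (Z (t j)) (t (j+1))
            + (v (Z (t j)) (t (j+1)) - v (Z (t j)) (t j)) := by abel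
      rw [this]
      calc _ ≤ X₁ * (C * h) + X₂ * h := hpart2
        _ = (C * X₁ + X₂) * h := by ring
    have hdecomp : Z (t (j+1)) - w
        = (Z (t j) - Zhat j)
          + h • (v (Z (t (j+1))) (t (j+1)) - v (Z (t j)) (t j))
          + h • (v (Z (t j)) (t j) - v (Zhat j) (t j)) := by
      rw [hw]
      nth_rewrite 1 [hE]
      module
    have hw_bound : ‖Z (t (j+1)) - w‖
        ≤ (1 + h * X₁) * ‖Z (t j) - Zhat j‖ + (C * X₁ + X₂) * h ^ 2 := by
      have hn1 : ‖h • (v (Z (t (j+1))) (t (j+1)) - v (Z (t j)) (t j))‖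
          ≤ h * ((C * X₁ + X₂) * h) := by
        rw [norm_smul, Real.norm_eq_abs, abs_of_pos hh0]
        exact mul_le_mul_of_nonneg_left htrunc hh0.le
      have hn2 : ‖h • (v (Z (t j)) (t j) - v (Zhat j) (t j))‖
          ≤ h * (X₁ * ‖Z (t j) - Zhat j‖) := by
        rw [norm_smul, Real.norm_eq_abs, abs_of_pos hh0]
        exact mul_le_mul_of_nonneg_left (hLipx _ hmj _ _) hh0.le
      have h3 : ‖Z (t (j+1)) - w‖
          ≤ ‖Z (t j) - Zhat j‖
            + ‖h • (v (Z (t (j+1))) (t (j+1)) - v (Z (t j)) (t j))‖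
            + ‖h • (v (Z (t j)) (t j) - v (Zhat j) (t j))‖ := by
        rw [hdecomp]; exact norm_add₃_le
      nlinarith [h3, hn1, hn2]
    have hdecomp2 : Z (t (j+1)) - Zhat (j+1)
        = (Z (t j) - Zhat j)
          + h • (v (Z (t (j+1))) (t (j+1)) - v w (t (j+1))) := by
      rw [hS]
      nth_rewrite 1 [hE]
      module
    have hn3 : ‖h • (v (Z (t (j+1))) (t (j+1)) - v w (t (j+1)))‖
        ≤ h * (X₁ * ‖Z (t (j+1)) - w‖) := by
      rw [norm_smul, Real.norm_eq_abs, abs_of_pos hh0]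
      exact mul_le_mul_of_nonneg_left (hLipx _ hmj1 _ _) hh0.le
    have h4 : ‖Z (t (j+1)) - Zhat (j+1)‖
        ≤ ‖Z (t j) - Zhat j‖ + ‖h • (v (Z (t (j+1))) (t (j+1)) - v w (t (j+1)))‖ := by
      rw [hdecomp2]; exact norm_add_le _ _
    have h5 : h * (X₁ * ‖Z (t (j+1)) - w‖)
        ≤ h * (X₁ * ((1 + h * X₁) * ‖Z (t j) - Zhat j‖ + (C * X₁ + X₂) * h ^ 2)) := by
      refine mul_le_mul_of_nonneg_left (mul_le_mul_of_nonneg_left hw_bound hX₁.le) hh0.le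
    rw [ha]
    nlinarith [h4, hn3, h5]
  have hind : ∀ j : ℕ, j ≤ N → ‖Z (t j) - Zhat j‖ ≤ B * ((1 + a) ^ j - 1) := by
    intro j
    induction j with
    | zero =>
      intro _
      have ht0 : t 0 = 0 := by rw [ht]; simp
      rw [ht0, hZhat0]
      simp
    | succ j ih =>
      intro hj
      have ih' := ih (by omega)
      have hs := hstep j hj
      have hpow : (0:ℝ) ≤ (1 + a) ^ j := by positivity
      have hba : X₁ * (C * X₁ + X₂) * h ^ 3 ≤ B * a := by
        rw [hB, ha]
        nlinarith [sq_nonneg h, sq_nonneg X₁, mul_nonneg hK (sq_nonneg (h * X₁)),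
          mul_nonneg (mul_nonneg hK (sq_nonneg h)) (sq_nonneg (h * X₁))]
      calc ‖Z (t (j+1)) - Zhat (j+1)‖
          ≤ (1 + a) * ‖Z (t j) - Zhat j‖ + X₁ * (C * X₁ + X₂) * h ^ 3 := hs
        _ ≤ (1 + a) * (B * ((1 + a) ^ j - 1)) + B * a := by
            refine add_le_add (mul_le_mul_of_nonneg_left ih' (by linarith)) hba
        _ = B * ((1 + a) ^ (j + 1) - 1) := by ring
  have ht1 : t N = 1 := by rw [ht]; exact hNh
  have hfinal := hind N le_rfl
  rw [ht1] at hfinal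
  have hexp : (1 + a) ^ N ≤ Real.exp (X₁ + X₁ ^ 2) := by
    have h1 : 1 + a ≤ Real.exp a := by
      have := Real.add_one_le_exp a; linarith
    have h2 : (1 + a) ^ N ≤ Real.exp a ^ N :=
      pow_le_pow_left₀ (by linarith) h1 N
    have h3 : Real.exp a ^ N = Real.exp ((N:ℝ) * a) := by
      rw [← Real.exp_nat_mul]
    have hNa : (N:ℝ) * a ≤ X₁ + X₁ ^ 2 := by
      rw [ha]
      have heq : (N:ℝ) * (h * X₁ + h ^ 2 * X₁ ^ 2)
          = ((N:ℝ) * h) * X₁ + ((N:ℝ) * h) * h * X₁ ^ 2 := by ring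
      rw [heq, hNh]
      linarith [mul_le_mul_of_nonneg_left hh1 (sq_nonneg X₁)]
    calc (1 + a) ^ N ≤ Real.exp ((N:ℝ) * a) := by rw [← h3]; exact h2
      _ ≤ Real.exp (X₁ + X₁ ^ 2) := Real.exp_le_exp.mpr hNa
  calc ‖Z 1 - Zhat N‖ ≤ B * ((1 + a) ^ N - 1) := hfinal
    _ ≤ B * (Real.exp (X₁ + X₁ ^ 2) - 1) := by
        refine mul_le_mul_of_nonneg_left (by linarith) hB0
    _ = (C * X₁ + X₂) * (Real.exp (X₁ + X₁ ^ 2) - 1) * h ^ 2 := by rw [hB]; ring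
end
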